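/- Let Σ be an n×n positive definite matrix, K ⊆ {1,…,n} a set of indices, W = Σ[·,K] (the n×|K| submatrix with columns restricted to K), V = Σ[K,K], and Φ an r'×|K| full-row-rank matrix. Then the Schur-type residual Σ − WΦᵀ(ΦVΦᵀ)⁻¹ΦWᵀ is positive semidefinite. -/

import Mathlib

open Matrix

private lemma sandwich_posDef {m n : ℕ} {S : Matrix (Fin n) (Fin n) ℝ} (hS : S.PosDef)
    {C : Matrix (Fin m) (Fin n) ℝ} (hC : Function.Injective (fun x : Fin m → ℝ => Cᵀ *ᵥ x)) :
    (C * S * Cᵀ).PosDef := by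
  refine posDef_iff_dotProduct_mulVec.mpr ⟨?_, ?_⟩
  · have h1 := hS.1
    rw [Matrix.IsHermitian, conjTranspose_eq_transpose_of_trivial] at h1 ⊢
    rw [transpose_mul, transpose_mul, transpose_transpose, h1, Matrix.mul_assoc]
  · intro x hx
    have hy : Cᵀ *ᵥ x ≠ 0 := by
      intro h
      apply hx
      apply hC
      simpa using h
    have := (posDef_iff_dotProduct_mulVec.mp hS).2 hy
    simpa [Matrix.mul_assoc, ← mulVec_mulVec, dotProduct_mulVec, star_mulVec,
      ← mulVec_transpose] using this

private lemma incl_mul_left {n : ℕ} {κ α : Type*} [Fintype κ] [Fintype α] (e : κ → Fin n)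
    (M : Matrix (Fin n) α ℝ) :
    ((1 : Matrix (Fin n) (Fin n) ℝ).submatrix e id) * M = M.submatrix e id := by
  ext i j
  simp [mul_apply, one_apply]

private lemma incl_mul_right {n : ℕ} {κ α : Type*} [Fintype κ] [Fintype α] [DecidableEq κ]
    (e : κ → Fin n) (M : Matrix α (Fin n) ℝ) :
    M * ((1 : Matrix (Fin n) (Fin n) ℝ).submatrix e id)ᵀ = M.submatrix id e := by
  ext i j
  simp [mul_apply, one_apply]

private lemma incl_mulVec_apply {n : ℕ} {κ : Type*} [Fintype κ] [DecidableEq κ] (e : κ → Fin n)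
    (he : Function.Injective e) (y : κ → ℝ) (k : κ) :
    (((1 : Matrix (Fin n) (Fin n) ℝ).submatrix e id)ᵀ *ᵥ y) (e k) = y k := by
  simp only [mulVec, dotProduct, transpose_apply, submatrix_apply, id_eq, one_apply]
  rw [Finset.sum_eq_single k]
  · simp
  · intro b _ hb
    rw [if_neg (fun hc => hb (he hc)), zero_mul]
  · simp

private lemma incl_mulVec_inj {n : ℕ} {κ : Type*} [Fintype κ] [DecidableEq κ] (e : κ → Fin n)
    (he : Function.Injective e) :
    Function.Injective (fun y : κ → ℝ => ((1 : Matrix (Fin n) (Fin n) ℝ).submatrix e id)ᵀ *ᵥ y) := by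
  intro y z h
  funext k
  have h2 := congrFun h (e k)
  simp only [incl_mulVec_apply e he] at h2
  exact h2

theorem schur_residual_posSemidef (n r' : ℕ)
    (S : Matrix (Fin n) (Fin n) ℝ) (hS : S.PosDef)
    (K : Finset (Fin n))
    (Φ : Matrix (Fin r') {k // k ∈ K} ℝ) (hΦ : Φ.rank = r')
    (W : Matrix (Fin n) {k // k ∈ K} ℝ) (hW : W = S.submatrix id (fun k : {k // k ∈ K} => (k : Fin n)))
    (V : Matrix {k // k ∈ K} {k // k ∈ K} ℝ)
    (hV : V = S.submatrix (fun k : {k // k ∈ K} => (k : Fin n)) (fun k : {k // k ∈ K} => (k : Fin n))) :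
    (S - W * Φᵀ * (Φ * V * Φᵀ)⁻¹ * Φ * Wᵀ).PosSemidef := by
  classical
  set e : {k // k ∈ K} → Fin n := fun k => (k : Fin n) with he
  have heinj : Function.Injective e := Subtype.val_injective
  set L : Matrix {k // k ∈ K} (Fin n) ℝ := (1 : Matrix (Fin n) (Fin n) ℝ).submatrix e id with hL
  have hSsymm : Sᵀ = S := by
    have h1 := hS.1
    rwa [Matrix.IsHermitian, conjTranspose_eq_transpose_of_trivial] at h1
  have hWL : W = S * Lᵀ := by rw [hW, hL, incl_mul_right]
  have hWT : Wᵀ = L * S := by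
    rw [hWL, transpose_mul, transpose_transpose, hSsymm]
  have hVL : V = L * S * Lᵀ := by
    rw [hV, hL, incl_mul_left, incl_mul_right]
    simp
  set C : Matrix (Fin r') (Fin n) ℝ := Φ * L with hC
  have hCVC : Φ * V * Φᵀ = C * S * Cᵀ := by
    rw [hVL, hC, transpose_mul]
    simp only [Matrix.mul_assoc]
  have hli : LinearIndependent ℝ (fun i => Φ i) :=
    linearIndependent_iff_card_eq_finrank_span.mpr (by
      have h3 := Φ.rank_eq_finrank_span_row
      rw [hΦ] at h3
      rw [Fintype.card_fin]
      exact h3)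
  have hΦinj : Function.Injective (fun x : Fin r' → ℝ => Φᵀ *ᵥ x) := by
    have hv := Matrix.vecMul_injective_iff.mpr hli
    intro x y h
    apply hv
    simpa [← mulVec_transpose] using h
  have hCinj : Function.Injective (fun x : Fin r' → ℝ => Cᵀ *ᵥ x) := by
    intro x y h
    apply hΦinj
    apply incl_mulVec_inj e heinj
    simpa [hC, transpose_mul, ← mulVec_mulVec, hL] using h
  have hApd : (Φ * V * Φᵀ).PosDef := by
    rw [hCVC]; exact sandwich_posDef hS hCinj
  haveI : Invertible S := S.invertibleOfIsUnitDet hS.det_pos.ne'.isUnit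
  haveI : Invertible (Φ * V * Φᵀ) :=
    (Φ * V * Φᵀ).invertibleOfIsUnitDet hApd.det_pos.ne'.isUnit
  set B : Matrix (Fin r') (Fin n) ℝ := Φ * Wᵀ with hB
  have hBT : Bᴴ = W * Φᵀ := by
    rw [conjTranspose_eq_transpose_of_trivial, hB, transpose_mul, transpose_transpose]
  have hB' : B = C * S := by rw [hB, hWT, hC, Matrix.mul_assoc]
  have hBH : Bᴴ = S * Cᵀ := by
    rw [hBT, hWL, hC, transpose_mul, Matrix.mul_assoc]
  have hkey : Φ * V * Φᵀ = B * S⁻¹ * Bᴴ := by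
    rw [hBH, hB', hCVC, Matrix.mul_inv_cancel_right_of_invertible, Matrix.mul_assoc]
  have h0 : (Φ * V * Φᵀ - B * S⁻¹ * Bᴴ).PosSemidef := by
    rw [← hkey, sub_self]
    exact Matrix.PosSemidef.zero
  have hPSD := (Matrix.PosDef.fromBlocks₂₂ (Φ * V * Φᵀ) B hS).mpr h0
  have hfin := (Matrix.PosDef.fromBlocks₁₁ B S hApd).mp hPSD
  rw [hBT, hB] at hfin
  have hEq : S - W * Φᵀ * (Φ * V * Φᵀ)⁻¹ * Φ * Wᵀ
      = S - W * Φᵀ * (Φ * V * Φᵀ)⁻¹ * (Φ * Wᵀ) := by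
    simp only [Matrix.mul_assoc]
  rw [hEq]
  exact hfin
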